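/- Let p be a prime or p = ∞, and let μ be a nondegenerate probability measure on ℚ* × ℚ. If ν is a μ-stationary probability measure on ℚ_p, then ν has no atoms: ν({z}) = 0 for every z ∈ ℚ_p. -/

import Mathlib

open MeasureTheory Filter Topology ENNReal

theorem aux_finite_atoms {K : Type*} [MeasurableSpace K] [MeasurableSingletonClass K]
    (ν : Measure K) [IsProbabilityMeasure ν] {α : ℝ≥0∞} (hα : α ≠ 0) (hαtop : α ≠ ⊤) :
    {z : K | α ≤ ν {z}}.Finite := by
  by_contra hinf
  have hinf : {z : K | α ≤ ν {z}}.Infinite := hinf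
  obtain ⟨n, hn⟩ := ENNReal.exists_nat_gt (ENNReal.inv_ne_top.mpr hα)
  have h1 : (1 : ℝ≥0∞) < n * α := by
    have := (ENNReal.mul_lt_mul_iff_right hα hαtop).mpr hn
    rwa [ENNReal.mul_inv_cancel hα hαtop, mul_comm] at this
  obtain ⟨t, htsub, htfin, htcard⟩ := (Set.Infinite.exists_subset_ncard_eq hinf n)
  set s := htfin.toFinset with hs
  have hcard : s.card = n := by
    rw [← htcard, Set.ncard_eq_toFinset_card t htfin]
  have hsum : (n : ℝ≥0∞) * α ≤ ν ↑s := by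
    have hb : ν ↑s = ∑ z ∈ s, ν {z} := by
      have : (↑s : Set K) = ⋃ z ∈ s, {z} := by ext w; simp
      rw [this, measure_biUnion_finset]
      · exact fun x _ y _ hxy => by simp [Set.disjoint_singleton, hxy]
      · exact fun _ _ => measurableSet_singleton _
    rw [hb]
    calc (n : ℝ≥0∞) * α = ∑ _z ∈ s, α := by
          rw [Finset.sum_const, hcard, nsmul_eq_mul]
      _ ≤ ∑ z ∈ s, ν {z} := by
          refine Finset.sum_le_sum fun z hz => ?_
          exact htsub (htfin.mem_toFinset.mp hz)
  have hle : ν ↑s ≤ 1 := prob_le_one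
  exact absurd (h1.trans_le (hsum.trans hle)) (lt_irrefl _)



/-- Let `K` be a complete normed field realizing a place of `ℚ`
(a prime `p` or `p = ∞`), i.e. `ℚ_p` or `ℝ`.  Let `μ` be a nondegenerate probability
measure on `ℚ* × ℚ` (modelled as a probability measure on `ℚ × ℚ` giving no mass to
`{a = 0}`, with `μ({a = 1}) < 1` and `μ({(a,b) : a z + b = z}) < 1` for every `z ∈ ℚ`).
If `ν` is a `μ`-stationary probability measure on `ℚ_p`
(`∫ f dν = ∫∫ f(a z + b) dμ(a,b) dν(z)` for every bounded Borel `f`),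
then `ν` has no atoms: `ν({z}) = 0` for every `z ∈ ℚ_p`. -/
theorem statement4
    {K : Type*} [NormedField K] [CompleteSpace K] [MeasurableSpace K] [BorelSpace K]
    (ι : ℚ →+* K) (hdense : DenseRange ι)
    (hplace : (∀ q : ℚ, ‖ι q‖ = |(q : ℝ)|) ∨
      ∃ p : ℕ, p.Prime ∧ ∀ q : ℚ, ‖ι q‖ = (padicNorm p q : ℝ))
    (μ : Measure (ℚ × ℚ)) [IsProbabilityMeasure μ]
    (hμ0 : μ {x | x.1 = 0} = 0)
    (hnondeg₁ : μ {x | x.1 = 1} < 1)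
    (hnondeg₂ : ∀ z : ℚ, μ {x | x.1 * z + x.2 = z} < 1)
    (ν : Measure K) [IsProbabilityMeasure ν]
    (hstat : ∀ f : K → ℝ, Measurable f → (∃ C, ∀ x, |f x| ≤ C) →
      ∫ z, f z ∂ν = ∫ x, ∫ z, f (ι x.1 * z + ι x.2) ∂ν ∂μ) :
    ∀ z : K, ν {z} = 0 := by
  classical
  by_contra hcon
  push_neg at hcon
  obtain ⟨z0, hz0⟩ := hcon
  have hι : Function.Injective ι := ι.injective
  set α := ν {z0} with hαdef
  have hα0 : α ≠ 0 := hz0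
  have hαtop : α ≠ ⊤ := measure_ne_top ν _
  have hF : {z : K | α ≤ ν {z}}.Finite := aux_finite_atoms ν hα0 hαtop
  obtain ⟨z1, hz1mem, hz1max⟩ := Finset.exists_max_image hF.toFinset (fun z => ν {z})
    ⟨z0, hF.mem_toFinset.mpr (le_refl α)⟩
  set m := ν {z1} with hmdef
  have hαm : α ≤ m := hF.mem_toFinset.mp hz1mem
  have hmax : ∀ w : K, ν {w} ≤ m := by
    intro w
    by_cases hw : α ≤ ν {w}
    · exact hz1max w (hF.mem_toFinset.mpr hw)
    · exact (not_le.mp hw).le.trans hαm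
  have hmtop : m ≠ ⊤ := measure_ne_top ν _
  set S := {w : K | ν {w} = m} with hSdef
  have hSsub : S ⊆ {z : K | α ≤ ν {z}} := fun w hw => by
    simp only [Set.mem_setOf_eq] at hw ⊢; rw [hw]; exact hαm
  have hSfin : S.Finite := hF.subset hSsub
  set s : Finset K := hSfin.toFinset with hsdef
  have hz1S : z1 ∈ s := hSfin.mem_toFinset.mpr hmdef.symm
  set n := s.card with hndef
  have hn0 : n ≠ 0 := Finset.card_ne_zero_of_mem hz1S
  set T := ∑ w ∈ s, w with hTdef
  have hg : ∀ x : ℚ × ℚ, Measurable fun w : K => ι x.1 * w + ι x.2 := fun x =>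
    ((continuous_const.mul continuous_id).add continuous_const).measurable
  -- stationarity for singletons
  have hkey : ∀ z : K, (ν {z}).toReal
      = ∫ x, (ν ((fun w : K => ι x.1 * w + ι x.2) ⁻¹' {z})).toReal ∂μ := by
    intro z
    have hf : Measurable (({z} : Set K).indicator (1 : K → ℝ)) :=
      measurable_const.indicator (measurableSet_singleton z)
    have hb : ∃ C, ∀ x, |({z} : Set K).indicator (1 : K → ℝ) x| ≤ C := by
      refine ⟨1, fun x => ?_⟩
      by_cases hx : x ∈ ({z} : Set K) <;> simp [Set.indicator_apply, hx]
    have hinner : ∀ x : ℚ × ℚ, ∫ w, ({z} : Set K).indicator (1 : K → ℝ) (ι x.1 * w + ι x.2) ∂ν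
        = (ν ((fun w : K => ι x.1 * w + ι x.2) ⁻¹' {z})).toReal := by
      intro x
      have heq : (fun w => ({z} : Set K).indicator (1 : K → ℝ) (ι x.1 * w + ι x.2))
          = ((fun w : K => ι x.1 * w + ι x.2) ⁻¹' {z}).indicator (1 : K → ℝ) := by
        funext w
        by_cases hw : ι x.1 * w + ι x.2 ∈ ({z} : Set K)
        · rw [Set.indicator_of_mem hw,
            Set.indicator_of_mem (show w ∈ (fun w : K => ι x.1 * w + ι x.2) ⁻¹' {z} from hw)]
          rfl
        · rw [Set.indicator_of_notMem hw,
            Set.indicator_of_notMem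
              (show w ∉ (fun w : K => ι x.1 * w + ι x.2) ⁻¹' {z} from hw)]
      rw [heq, integral_indicator_one ((hg x) (measurableSet_singleton z))]
      rfl
    calc (ν {z}).toReal = ∫ w, ({z} : Set K).indicator (1 : K → ℝ) w ∂ν :=
          (integral_indicator_one (measurableSet_singleton z)).symm
      _ = ∫ x, ∫ w, ({z} : Set K).indicator (1 : K → ℝ) (ι x.1 * w + ι x.2) ∂ν ∂μ :=
          hstat _ hf hb
      _ = ∫ x, (ν ((fun w : K => ι x.1 * w + ι x.2) ⁻¹' {z})).toReal ∂μ :=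
          integral_congr_ae (Filter.Eventually.of_forall hinner)
  have hae0 : ∀ᵐ x ∂μ, x.1 ≠ 0 := by
    rw [ae_iff]
    convert hμ0 using 2
    ext x; simp
  have hpre : ∀ x : ℚ × ℚ, x.1 ≠ 0 → ∀ z : K,
      (fun w : K => ι x.1 * w + ι x.2) ⁻¹' {z} = {(z - ι x.2) * (ι x.1)⁻¹} := by
    intro x hx z
    have ha : (ι x.1 : K) ≠ 0 := fun h => hx (hι (h.trans (map_zero ι).symm))
    ext w
    simp only [Set.mem_preimage, Set.mem_singleton_iff]
    constructor
    · intro h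
      rw [← h, add_sub_cancel_right, mul_comm (ι x.1) w, mul_inv_cancel_right₀ ha]
    · intro h
      rw [h, mul_comm (ι x.1) _, inv_mul_cancel_right₀ ha, sub_add_cancel]
  -- main a.e. step for each maximal atom
  have hstep : ∀ z ∈ (↑s : Set K), ∀ᵐ x ∂μ, x.1 ≠ 0 → ((z - ι x.2) * (ι x.1)⁻¹ ∈ S) := by
    intro z hzs
    have hzm : ν {z} = m := hSfin.mem_toFinset.mp hzs
    set G : ℚ × ℚ → ℝ := fun x => (ν ((fun w : K => ι x.1 * w + ι x.2) ⁻¹' {z})).toReal with hG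
    have hGmeas : Measurable G := Measurable.of_discrete
    have hGbdd : ∀ x, ‖G x‖ ≤ 1 := by
      intro x
      rw [Real.norm_eq_abs, abs_of_nonneg ENNReal.toReal_nonneg]
      calc G x ≤ (1 : ℝ≥0∞).toReal := ENNReal.toReal_mono (by norm_num) prob_le_one
        _ = 1 := by simp
    have hGint : Integrable G μ :=
      ⟨hGmeas.aestronglyMeasurable, HasFiniteIntegral.of_bounded (C := 1)
        (Filter.Eventually.of_forall hGbdd)⟩
    have hGeq : ∫ x, G x ∂μ = m.toReal := by rw [← hzm, hkey z]
    set M := m.toReal with hM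
    have hHnn : ∀ᵐ x ∂μ, 0 ≤ M - G x := by
      filter_upwards [hae0] with x hx
      have hGx : G x = (ν {(z - ι x.2) * (ι x.1)⁻¹}).toReal := by
        simp only [hG]; rw [hpre x hx z]
      have h1 : (ν {(z - ι x.2) * (ι x.1)⁻¹}).toReal ≤ M := ENNReal.toReal_mono hmtop (hmax _)
      rw [hGx]; linarith
    have hHint : Integrable (fun x => M - G x) μ := (integrable_const M).sub hGint
    have hH0 : ∫ x, (M - G x) ∂μ = 0 := by
      rw [integral_sub (integrable_const M) hGint, integral_const, hGeq]
      simp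
    have hae := (integral_eq_zero_iff_of_nonneg_ae hHnn hHint).mp hH0
    filter_upwards [hae, hae0] with x hx1 hx2
    intro _
    have hGx : G x = (ν {(z - ι x.2) * (ι x.1)⁻¹}).toReal := by
      simp only [hG]; rw [hpre x hx2 z]
    have hx1' : M - G x = 0 := hx1
    have htr : (ν {(z - ι x.2) * (ι x.1)⁻¹}).toReal = m.toReal := by
      rw [← hGx, hM] at *; linarith
    exact (ENNReal.toReal_eq_toReal_iff' (measure_ne_top _ _) hmtop).mp htr
  have hallz : ∀ᵐ x ∂μ, ∀ z ∈ (↑s : Set K), x.1 ≠ 0 → ((z - ι x.2) * (ι x.1)⁻¹ ∈ S) :=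
    (ae_ball_iff s.countable_toSet).mpr hstep
  -- a.e. affine relation on T
  have hE : ∀ᵐ x ∂μ, ι x.1 * T + (n : K) * ι x.2 = T := by
    filter_upwards [hallz, hae0] with x hx hx0
    have ha : (ι x.1 : K) ≠ 0 := fun h => hx0 (hι (h.trans (map_zero ι).symm))
    set ψ : K → K := fun w => (w - ι x.2) * (ι x.1)⁻¹ with hψ
    have hψinj : Function.Injective ψ := by
      intro u v huv
      have := mul_right_cancel₀ (inv_ne_zero ha) huv
      exact sub_left_inj.mp this
    have himg : s.image ψ = s := by
      apply Finset.eq_of_subset_of_card_le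
      · intro w hw
        obtain ⟨u, hu, rfl⟩ := Finset.mem_image.mp hw
        exact hSfin.mem_toFinset.mpr (hx u (Finset.mem_coe.mpr hu) hx0)
      · rw [Finset.card_image_of_injective _ hψinj]
    have hsum : ∑ w ∈ s, ψ w = T := by
      calc ∑ w ∈ s, ψ w = ∑ w ∈ s.image ψ, w :=
            (Finset.sum_image (g := ψ) (f := fun w => w) (fun u _ v _ h => hψinj h)).symm
        _ = T := by rw [himg]
    have hsum2 : ∑ w ∈ s, ψ w = (T - (n : K) * ι x.2) * (ι x.1)⁻¹ := by
      simp only [hψ]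
      rw [← Finset.sum_mul, Finset.sum_sub_distrib, Finset.sum_const, nsmul_eq_mul, hTdef]
    have hrel : (T - (n : K) * ι x.2) * (ι x.1)⁻¹ = T := by rw [← hsum2]; exact hsum
    rw [mul_inv_eq_iff_eq_mul₀ ha] at hrel
    linear_combination (-1 : K) * hrel
  have hEc : μ {x : ℚ × ℚ | ι x.1 * T + (n : K) * ι x.2 = T}ᶜ = 0 := by
    rw [Set.compl_setOf]; exact ae_iff.mp hE
  set E : Set (ℚ × ℚ) := {x | ι x.1 * T + (n : K) * ι x.2 = T} with hEdef
  have hfinal : ∀ B : Set (ℚ × ℚ), E ⊆ B → μ B < 1 → False := by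
    intro B hEB hB
    have hcover : μ Set.univ ≤ μ Eᶜ + μ B := by
      calc μ Set.univ ≤ μ (Eᶜ ∪ B) := measure_mono (by
            intro x _
            by_cases hx : x ∈ E
            exacts [Or.inr (hEB hx), Or.inl hx])
        _ ≤ μ Eᶜ + μ B := measure_union_le _ _
    rw [hEc, zero_add, measure_univ] at hcover
    exact absurd hcover (not_le.mpr hB)
  have hnQ : ((n : ℚ)) ≠ 0 := Nat.cast_ne_zero.mpr hn0
  by_cases hT : ∃ t : ℚ, T = ι t
  · obtain ⟨t, ht⟩ := hT
    refine hfinal {x | x.1 * (t / n) + x.2 = t / n} ?_ (hnondeg₂ (t / n))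
    intro x hx
    have hx' : ι x.1 * T + (n : K) * ι x.2 = T := hx
    rw [ht] at hx'
    have hx'' : ι (x.1 * t + n * x.2) = ι t := by
      rw [map_add, map_mul, map_mul, map_natCast]; exact hx'
    have hrat : x.1 * t + n * x.2 = t := hι hx''
    simp only [Set.mem_setOf_eq]
    field_simp
    linear_combination hrat
  · push_neg at hT
    have hEne : E.Nonempty := by
      by_contra he
      rw [Set.not_nonempty_iff_eq_empty] at he
      rw [he, Set.compl_empty, measure_univ] at hEc
      exact one_ne_zero hEc
    obtain ⟨x0, hx0⟩ := hEne
    have hx0' : ι x0.1 * T + (n : K) * ι x0.2 = T := hx0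
    have hsame : ∀ x ∈ E, x.1 = x0.1 := by
      intro x hx
      by_contra hne
      have hx' : ι x.1 * T + (n : K) * ι x.2 = T := hx
      have hd : (ι x.1 - ι x0.1 : K) ≠ 0 := by
        intro h
        exact hne (hι (sub_eq_zero.mp h))
      refine hT ((n * (x0.2 - x.2)) / (x.1 - x0.1)) ?_
      rw [map_div₀, map_mul, map_natCast, map_sub, map_sub, eq_div_iff hd]
      linear_combination hx' - hx0'
    by_cases h1 : x0.1 = 1
    · refine hfinal {x | x.1 = 1} ?_ hnondeg₁
      intro x hx
      simp only [Set.mem_setOf_eq]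
      rw [hsame x hx, h1]
    · have ha1 : (1 : K) - ι x0.1 ≠ 0 := by
        intro h
        exact h1 (hι ((map_one ι).trans (sub_eq_zero.mp h)).symm)
      refine hT ((n * x0.2) / (1 - x0.1)) ?_
      rw [map_div₀, map_mul, map_natCast, map_sub, map_one, eq_div_iff ha1]
      linear_combination (-1 : K) * hx0'
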